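/- Let T > 0, let M : ℝ^n → (J × n real matrices) be continuous with c > 0 such that ‖M(x) y‖ ≥ c ‖y‖ for all x, y ∈ ℝ^n, and let v ∈ ℝ^n. Let Φ_f, Φ_1 : [0,T] × ℝ^n → ℝ be continuous and bounded, with Φ_1 ≥ 0 and Φ_1(T,v) > 0. Then lim_{t → T⁻} ( ∫_{ℝ^n} Φ_f(t,q) exp(−‖M(q)(q−v)‖²/(2(T−t))) dq ) / ( ∫_{ℝ^n} Φ_1(t,q) exp(−‖M(q)(q−v)‖²/(2(T−t))) dq ) = Φ_f(T,v) / Φ_1(T,v); in particular the denominator is strictly positive for t sufficiently close to T. -/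

import Mathlib

set_option maxHeartbeats 1000000


open MeasureTheory Matrix

/-- The Euclidean norm of a vector in `ℝ^k`. -/
noncomputable def euclidNorm {k : ℕ} (v : Fin k → ℝ) : ℝ :=
  ‖(EuclideanSpace.equiv (Fin k) ℝ).symm v‖

lemma enorm_nonneg' {k : ℕ} (v : Fin k → ℝ) : 0 ≤ euclidNorm v := norm_nonneg _

lemma enorm_smul' {k : ℕ} (s : ℝ) (w : Fin k → ℝ) : euclidNorm (s • w) = |s| * euclidNorm w := by
  unfold euclidNorm
  rw [_root_.map_smul, norm_smul, Real.norm_eq_abs]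

lemma enorm_continuous {k : ℕ} : Continuous fun v : Fin k → ℝ => euclidNorm v :=
  ((EuclideanSpace.equiv (Fin k) ℝ).symm.continuous).norm

lemma enorm_sq {k : ℕ} (v : Fin k → ℝ) : euclidNorm v ^ 2 = ∑ i, v i ^ 2 := by
  unfold euclidNorm
  rw [EuclideanSpace.norm_eq, Real.sq_sqrt (by positivity)]
  simp [Real.norm_eq_abs, sq_abs]

lemma integrable_gauss {k : ℕ} {b : ℝ} (hb : 0 < b) :
    Integrable (fun y : Fin k → ℝ => Real.exp (-b * euclidNorm y ^ 2)) := by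
  have h := MeasureTheory.Integrable.fintype_prod
    (f := fun (_ : Fin k) (x : ℝ) => Real.exp (-b * x ^ 2))
    (fun _ => integrable_exp_neg_mul_sq hb)
  refine h.congr (Filter.Eventually.of_forall fun y => ?_)
  show (∏ i, Real.exp (-b * y i ^ 2)) = Real.exp (-b * euclidNorm y ^ 2)
  rw [← Real.exp_sum, enorm_sq]
  congr 1
  rw [Finset.mul_sum]

lemma cov_lemma {n : ℕ} (s : ℝ) (hs : 0 < s) (v : Fin n → ℝ) (f : (Fin n → ℝ) → ℝ) :
    ∫ q, f q = s ^ n * ∫ y, f (v + s • y) := by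
  have h1 : (∫ y : Fin n → ℝ, f (v + s • y))
      = ∫ y : Fin n → ℝ, (fun x => f (v + x)) (s • y) := rfl
  rw [h1, MeasureTheory.Measure.integral_comp_smul volume (fun x => f (v + x)) s,
    integral_add_left_eq_self (fun x => f x) v, Module.finrank_pi, Fintype.card_fin,
    abs_inv, abs_pow, abs_of_pos hs, smul_eq_mul, ← mul_assoc,
    mul_inv_cancel₀ (by positivity), one_mul]

lemma subst_eq {n J : ℕ} {T t : ℝ} (ht : t ∈ Set.Ioo 0 T)
    (M : (Fin n → ℝ) → Matrix (Fin J) (Fin n) ℝ) (v : Fin n → ℝ)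
    (Φ : ℝ → (Fin n → ℝ) → ℝ) :
    (∫ q : Fin n → ℝ, Φ t q * Real.exp (-euclidNorm (M q *ᵥ (q - v)) ^ 2 / (2 * (T - t))))
      = Real.sqrt (T - t) ^ n * ∫ y : Fin n → ℝ, Φ t (v + Real.sqrt (T - t) • y) *
          Real.exp (-euclidNorm (M (v + Real.sqrt (T - t) • y) *ᵥ y) ^ 2 / 2) := by
  have hTt : 0 < T - t := sub_pos.2 ht.2
  have hs : 0 < Real.sqrt (T - t) := Real.sqrt_pos.2 hTt
  have h2 : Real.sqrt (T - t) ^ 2 = T - t := Real.sq_sqrt hTt.le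
  rw [cov_lemma _ hs v
    (fun q => Φ t q * Real.exp (-euclidNorm (M q *ᵥ (q - v)) ^ 2 / (2 * (T - t))))]
  congr 1
  refine integral_congr_ae (Filter.Eventually.of_forall fun y => ?_)
  dsimp only
  have h3 : v + Real.sqrt (T - t) • y - v = Real.sqrt (T - t) • y := add_sub_cancel_left v _
  rw [h3, mulVec_smul, enorm_smul', abs_of_pos hs, mul_pow, h2]
  congr 1
  field_simp

lemma tendsto_subst {n J : ℕ} {T : ℝ} (hT : 0 < T)
    {M : (Fin n → ℝ) → Matrix (Fin J) (Fin n) ℝ} (hM : Continuous M)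
    {c : ℝ} (hc : 0 < c) (hMc : ∀ x y : Fin n → ℝ, c * euclidNorm y ≤ euclidNorm (M x *ᵥ y))
    (v : Fin n → ℝ) (Φ : ℝ → (Fin n → ℝ) → ℝ)
    (hcont : ContinuousOn (fun z : ℝ × (Fin n → ℝ) => Φ z.1 z.2)
      (Set.Icc 0 T ×ˢ Set.univ))
    (C : ℝ) (hbdd : ∀ t ∈ Set.Icc (0:ℝ) T, ∀ q : Fin n → ℝ, |Φ t q| ≤ C) :
    Filter.Tendsto (fun t : ℝ => ∫ y : Fin n → ℝ,
        Φ t (v + Real.sqrt (T - t) • y) *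
          Real.exp (-euclidNorm (M (v + Real.sqrt (T - t) • y) *ᵥ y) ^ 2 / 2))
      (nhdsWithin T (Set.Ioo 0 T))
      (nhds (∫ y : Fin n → ℝ, Φ T v * Real.exp (-euclidNorm (M v *ᵥ y) ^ 2 / 2))) := by
  have hTmem : ((T, v) : ℝ × (Fin n → ℝ)) ∈ Set.Icc (0:ℝ) T ×ˢ (Set.univ : Set (Fin n → ℝ)) :=
    ⟨⟨hT.le, le_refl T⟩, trivial⟩
  have hbound : ∀ (x : Fin n → ℝ) (y : Fin n → ℝ),
      Real.exp (-euclidNorm (M x *ᵥ y) ^ 2 / 2) ≤ Real.exp (-(c ^ 2 / 2) * euclidNorm y ^ 2) := by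
    intro x y
    apply Real.exp_le_exp.2
    have h3 : (c * euclidNorm y) ^ 2 ≤ euclidNorm (M x *ᵥ y) ^ 2 :=
      pow_le_pow_left₀ (mul_nonneg hc.le (enorm_nonneg' y)) (hMc x y) 2
    nlinarith [h3]
  apply tendsto_integral_filter_of_dominated_convergence
      (fun y : Fin n → ℝ => C * Real.exp (-(c ^ 2 / 2) * euclidNorm y ^ 2))
  · filter_upwards [self_mem_nhdsWithin] with t ht
    have htI : t ∈ Set.Icc (0:ℝ) T := ⟨ht.1.le, ht.2.le⟩
    have hΦt : Continuous fun q : Fin n → ℝ => Φ t q := by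
      have hpt : Continuous fun q : Fin n → ℝ => ((t, q) : ℝ × (Fin n → ℝ)) :=
        continuous_const.prodMk continuous_id
      exact hcont.comp_continuous hpt (fun q => ⟨htI, trivial⟩)
    have hq : Continuous fun y : Fin n → ℝ => v + Real.sqrt (T - t) • y :=
      continuous_const.add (continuous_const_smul _)
    have hcexp : Continuous fun y : Fin n → ℝ =>
        Real.exp (-euclidNorm (M (v + Real.sqrt (T - t) • y) *ᵥ y) ^ 2 / 2) := by
      apply Real.continuous_exp.comp
      exact (((enorm_continuous.comp ((hM.comp hq).matrix_mulVec continuous_id)).pow 2).neg).div_const 2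
    exact ((hΦt.comp hq).mul hcexp).aestronglyMeasurable
  · filter_upwards [self_mem_nhdsWithin] with t ht
    refine Filter.Eventually.of_forall fun y => ?_
    have htI : t ∈ Set.Icc (0:ℝ) T := ⟨ht.1.le, ht.2.le⟩
    have h1 : |Φ t (v + Real.sqrt (T - t) • y)| ≤ C := hbdd t htI _
    have hC : (0:ℝ) ≤ C := (abs_nonneg _).trans h1
    rw [Real.norm_eq_abs, abs_mul, Real.abs_exp]
    exact mul_le_mul h1 (hbound _ y) (Real.exp_pos _).le hC
  · exact (integrable_gauss (by positivity : (0:ℝ) < c ^ 2 / 2)).const_mul C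
  · refine Filter.Eventually.of_forall fun y => ?_
    have hst : Filter.Tendsto (fun t : ℝ => Real.sqrt (T - t))
        (nhdsWithin T (Set.Ioo 0 T)) (nhds 0) := by
      have hcs : Continuous fun t : ℝ => Real.sqrt (T - t) :=
        Real.continuous_sqrt.comp (continuous_const.sub continuous_id)
      have h := hcs.tendsto T
      simp only [sub_self, Real.sqrt_zero] at h
      exact h.mono_left nhdsWithin_le_nhds
    have hqy : Filter.Tendsto (fun t : ℝ => v + Real.sqrt (T - t) • y)
        (nhdsWithin T (Set.Ioo 0 T)) (nhds v) := by
      have h := (tendsto_const_nhds :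
        Filter.Tendsto (fun _ : ℝ => v) (nhdsWithin T (Set.Ioo 0 T)) (nhds v)).add
        (hst.smul_const y)
      simpa using h
    have hpair : Filter.Tendsto (fun t : ℝ => ((t, v + Real.sqrt (T - t) • y) : ℝ × (Fin n → ℝ)))
        (nhdsWithin T (Set.Ioo 0 T))
        (nhdsWithin (T, v) (Set.Icc (0:ℝ) T ×ˢ (Set.univ : Set (Fin n → ℝ)))) := by
      rw [tendsto_nhdsWithin_iff]
      constructor
      · exact (Filter.tendsto_id.mono_right nhdsWithin_le_nhds).prodMk_nhds hqy
      · filter_upwards [self_mem_nhdsWithin] with t ht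
        exact ⟨⟨ht.1.le, ht.2.le⟩, trivial⟩
    have hΦlim : Filter.Tendsto (fun t : ℝ => Φ t (v + Real.sqrt (T - t) • y))
        (nhdsWithin T (Set.Ioo 0 T)) (nhds (Φ T v)) :=
      ((hcont (T, v) hTmem).tendsto).comp hpair
    have hK : Continuous fun q : Fin n → ℝ =>
        Real.exp (-euclidNorm (M q *ᵥ y) ^ 2 / 2) := by
      apply Real.continuous_exp.comp
      exact (((enorm_continuous.comp (hM.matrix_mulVec continuous_const)).pow 2).neg).div_const 2
    have hexplim := (hK.tendsto v).comp hqy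
    exact hΦlim.mul hexplim

/-- The conclusion of the conditioning lemma: the ratio of the `Φ_f`- and `Φ_1`-weighted
Gaussian integrals converges to `Φ_f(T,v)/Φ_1(T,v)` as `t → T⁻`, and the denominator is
eventually strictly positive. -/
theorem gaussian_ratio_limit (n J : ℕ) (T : ℝ) (hT : 0 < T)
    (M : (Fin n → ℝ) → Matrix (Fin J) (Fin n) ℝ) (hM : Continuous M)
    (c : ℝ) (hc : 0 < c) (hMc : ∀ x y : Fin n → ℝ, c * euclidNorm y ≤ euclidNorm (M x *ᵥ y))
    (v : Fin n → ℝ)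
    (Φf Φ1 : ℝ → (Fin n → ℝ) → ℝ)
    (hΦfcont : ContinuousOn (fun z : ℝ × (Fin n → ℝ) => Φf z.1 z.2)
      (Set.Icc 0 T ×ˢ Set.univ))
    (Cf : ℝ) (hΦfbdd : ∀ t ∈ Set.Icc (0 : ℝ) T, ∀ q : Fin n → ℝ, |Φf t q| ≤ Cf)
    (hΦ1cont : ContinuousOn (fun z : ℝ × (Fin n → ℝ) => Φ1 z.1 z.2)
      (Set.Icc 0 T ×ˢ Set.univ))
    (C1 : ℝ) (hΦ1bdd : ∀ t ∈ Set.Icc (0 : ℝ) T, ∀ q : Fin n → ℝ, |Φ1 t q| ≤ C1)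
    (hΦ1nonneg : ∀ t ∈ Set.Icc (0 : ℝ) T, ∀ q : Fin n → ℝ, 0 ≤ Φ1 t q)
    (hΦ1pos : 0 < Φ1 T v) :
    Filter.Tendsto
      (fun t : ℝ =>
        (∫ q : Fin n → ℝ,
            Φf t q * Real.exp (-euclidNorm (M q *ᵥ (q - v)) ^ 2 / (2 * (T - t))))
          / ∫ q : Fin n → ℝ,
              Φ1 t q * Real.exp (-euclidNorm (M q *ᵥ (q - v)) ^ 2 / (2 * (T - t))))
      (nhdsWithin T (Set.Ioo 0 T))
      (nhds (Φf T v / Φ1 T v)) ∧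
    ∀ᶠ t in nhdsWithin T (Set.Ioo 0 T),
      0 < ∫ q : Fin n → ℝ,
            Φ1 t q * Real.exp (-euclidNorm (M q *ᵥ (q - v)) ^ 2 / (2 * (T - t))) := by
  have hGbound : ∀ y : Fin n → ℝ,
      Real.exp (-euclidNorm (M v *ᵥ y) ^ 2 / 2) ≤ Real.exp (-(c ^ 2 / 2) * euclidNorm y ^ 2) := by
    intro y
    apply Real.exp_le_exp.2
    have h3 : (c * euclidNorm y) ^ 2 ≤ euclidNorm (M v *ᵥ y) ^ 2 :=
      pow_le_pow_left₀ (mul_nonneg hc.le (enorm_nonneg' y)) (hMc v y) 2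
    nlinarith [h3]
  have hGint : Integrable (fun y : Fin n → ℝ => Real.exp (-euclidNorm (M v *ᵥ y) ^ 2 / 2)) := by
    refine (integrable_gauss (by positivity : (0:ℝ) < c ^ 2 / 2)).mono' ?_ ?_
    · apply Continuous.aestronglyMeasurable
      apply Real.continuous_exp.comp
      exact (((enorm_continuous.comp (continuous_const.matrix_mulVec continuous_id)).pow 2).neg).div_const 2
    · refine Filter.Eventually.of_forall fun y => ?_
      rw [Real.norm_eq_abs, Real.abs_exp]
      exact hGbound y
  set G := ∫ y : Fin n → ℝ, Real.exp (-euclidNorm (M v *ᵥ y) ^ 2 / 2) with hGdef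
  have hGpos : 0 < G := by
    rw [hGdef, integral_pos_iff_support_of_nonneg
      (fun y => (Real.exp_pos _).le) hGint]
    have hsupp : (Function.support fun y : Fin n → ℝ =>
        Real.exp (-euclidNorm (M v *ᵥ y) ^ 2 / 2)) = Set.univ := by
      ext y; simp [Function.mem_support, (Real.exp_pos _).ne']
    rw [hsupp]
    exact isOpen_univ.measure_pos volume Set.univ_nonempty
  have hf := tendsto_subst hT hM hc hMc v Φf hΦfcont Cf hΦfbdd
  have h1 := tendsto_subst hT hM hc hMc v Φ1 hΦ1cont C1 hΦ1bdd
  rw [integral_const_mul] at hf h1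
  have h1pos : 0 < Φ1 T v * G := mul_pos hΦ1pos hGpos
  constructor
  · have hratio := hf.div h1 h1pos.ne'
    rw [mul_div_mul_right _ _ hGpos.ne'] at hratio
    refine hratio.congr' ?_
    filter_upwards [self_mem_nhdsWithin] with t ht
    simp only [Pi.div_apply]
    rw [subst_eq ht M v Φf, subst_eq ht M v Φ1,
      mul_div_mul_left _ _ (pow_ne_zero n (Real.sqrt_pos.2 (sub_pos.2 ht.2)).ne')]
  · have hev : ∀ᶠ t in nhdsWithin T (Set.Ioo 0 T),
        0 < ∫ y : Fin n → ℝ, Φ1 t (v + Real.sqrt (T - t) • y) *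
          Real.exp (-euclidNorm (M (v + Real.sqrt (T - t) • y) *ᵥ y) ^ 2 / 2) :=
      h1.eventually (eventually_gt_nhds h1pos)
    filter_upwards [hev, self_mem_nhdsWithin] with t h1t ht
    rw [subst_eq ht M v Φ1]
    exact mul_pos (pow_pos (Real.sqrt_pos.2 (sub_pos.2 ht.2)) n) h1t
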